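/- Matrix inequality consequence: let X, Y be symmetric N×N matrices, L₂ ≥ 0, and Z a symmetric matrix such that Xz₁·z₁ - Yz₂·z₂ ≤ Z(z₁-z₂)·(z₁-z₂) + 2L₂|z₁|² for all z₁, z₂ ∈ ℝ^N, where Z = (2/ε̄)(I - (1+ϖ)â⊗â) with |â| = 1, ε̄ > 0, ϖ > 0. Then Tr(X - Y) ≤ -8ϖ/ε̄ + 2NL₂. -/

import Mathlib

open Matrix

lemma trace_eq_sum_onb (N : ℕ) (M : Matrix (Fin N) (Fin N) ℝ)
    (b : OrthonormalBasis (Fin N) ℝ (EuclideanSpace ℝ (Fin N))) :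
    M.trace = ∑ i, (M.mulVec (WithLp.equiv 2 _ (b i))) ⬝ᵥ (WithLp.equiv 2 _ (b i)) := by
  have h1 : M.trace = ((LinearMap.toMatrix b.toBasis b.toBasis) (Matrix.toEuclideanLin M)).trace := by
    rw [← LinearMap.trace_eq_matrix_trace, Matrix.toEuclideanLin_eq_toLin,
      LinearMap.trace_eq_matrix_trace ℝ (PiLp.basisFun 2 ℝ (Fin N)), LinearMap.toMatrix_toLin]
  rw [h1, Matrix.trace]
  apply Finset.sum_congr rfl
  intro i _
  rw [Matrix.diag_apply, LinearMap.toMatrix_apply, OrthonormalBasis.coe_toBasis,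
    OrthonormalBasis.coe_toBasis_repr_apply, OrthonormalBasis.repr_apply_apply,
    real_inner_comm, PiLp.inner_apply]
  simp [dotProduct, Matrix.toEuclideanLin_apply, mul_comm]

theorem stmt11 (N : ℕ) (hN : 1 ≤ N) (X Y : Matrix (Fin N) (Fin N) ℝ)
    (hXs : X.IsSymm) (hYs : Y.IsSymm) (L₂ ε' ϖ : ℝ) (hL₂ : 0 ≤ L₂) (hε : 0 < ε')
    (hϖ : 0 < ϖ) (A : Fin N → ℝ) (hA : A ⬝ᵥ A = 1)
    (Z : Matrix (Fin N) (Fin N) ℝ)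
    (hZ : Z = (2 / ε') • ((1 : Matrix (Fin N) (Fin N) ℝ) - (1 + ϖ) • vecMulVec A A))
    (hineq : ∀ z₁ z₂ : Fin N → ℝ,
      X.mulVec z₁ ⬝ᵥ z₁ - Y.mulVec z₂ ⬝ᵥ z₂ ≤
        Z.mulVec (z₁ - z₂) ⬝ᵥ (z₁ - z₂) + 2 * L₂ * (z₁ ⬝ᵥ z₁)) :
    (X - Y).trace ≤ -8 * ϖ / ε' + 2 * N * L₂ := by
  haveI : NeZero N := ⟨by omega⟩
  set i₀ : Fin N := ⟨0, by omega⟩ with hi₀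
  set aH : EuclideanSpace ℝ (Fin N) := (WithLp.equiv 2 (Fin N → ℝ)).symm A with haH
  -- orthonormal singleton family
  have hAinner : ∀ x y : Fin N → ℝ,
      (inner ℝ ((WithLp.equiv 2 (Fin N → ℝ)).symm x) ((WithLp.equiv 2 (Fin N → ℝ)).symm y) : ℝ)
        = x ⬝ᵥ y := by
    intro x y
    rw [PiLp.inner_apply]
    simp [dotProduct, mul_comm]
  have horth : Orthonormal ℝ (({i₀} : Set (Fin N)).restrict (fun _ : Fin N => aH)) := by
    rw [orthonormal_iff_ite]
    rintro ⟨i, hi⟩ ⟨j, hj⟩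
    simp only [Set.mem_singleton_iff] at hi hj
    have : i = j := by simp [hi, hj]
    simp only [this, if_pos rfl, Set.restrict_apply]
    change inner ℝ aH aH = _
    rw [haH, hAinner, hA]
    simp
  obtain ⟨b, hb⟩ := horth.exists_orthonormalBasis_extension_of_card_eq
    (by simp [finrank_euclideanSpace_fin]) 
  have hb0 : b i₀ = aH := hb i₀ rfl
  -- per-term bounds
  have key : ∀ i : Fin N,
      ((X - Y).mulVec (WithLp.equiv 2 _ (b i))) ⬝ᵥ (WithLp.equiv 2 _ (b i)) ≤
        2 * L₂ + (if i = i₀ then -8 * ϖ / ε' else 0) := by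
    intro i
    set v : Fin N → ℝ := WithLp.equiv 2 _ (b i) with hv
    have h2 : (inner ℝ (b i) (b i) : ℝ) = 1 := by
      rw [real_inner_self_eq_norm_mul_norm, b.orthonormal.1 i]; norm_num
    have hvv : v ⬝ᵥ v = 1 := by
      calc v ⬝ᵥ v = inner ℝ ((WithLp.equiv 2 (Fin N → ℝ)).symm v)
            ((WithLp.equiv 2 (Fin N → ℝ)).symm v) := (hAinner v v).symm
        _ = 1 := by rw [hv, Equiv.symm_apply_apply]; exact h2
    have hsub : (X - Y).mulVec v ⬝ᵥ v = X.mulVec v ⬝ᵥ v - Y.mulVec v ⬝ᵥ v := by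
      rw [Matrix.sub_mulVec, sub_dotProduct]
    by_cases hcase : i = i₀
    · -- v = A
      have hvA : v = A := by
        rw [hv, hcase, hb0, haH]
        exact (WithLp.equiv 2 _).apply_symm_apply A
      have h := hineq A (-A)
      have hYneg : Y.mulVec (-A) ⬝ᵥ (-A) = Y.mulVec A ⬝ᵥ A := by
        rw [Matrix.mulVec_neg, neg_dotProduct, dotProduct_neg, neg_neg]
      have hZA : Z.mulVec (A - -A) ⬝ᵥ (A - -A) = -8 * ϖ / ε' := by
        have h2A : A - -A = (2 : ℝ) • A := by
          funext j; simp [two_smul]; ring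
        rw [h2A, Matrix.mulVec_smul, smul_dotProduct, dotProduct_smul]
        have hZmv : Z.mulVec A = (2 / ε' * (-ϖ)) • A := by
          rw [hZ]
          funext j
          simp only [Matrix.smul_mulVec, Matrix.sub_mulVec, Matrix.smul_mulVec,
            Matrix.one_mulVec]
          have hA' : ∑ x, A x * A x = 1 := hA
          have : (vecMulVec A A).mulVec A = A := by
            funext k
            simp only [Matrix.mulVec, Matrix.vecMulVec_apply, dotProduct]
            simp only [mul_assoc, ← Finset.mul_sum]
            rw [hA', mul_one]
          rw [this]
          simp [Pi.smul_apply]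
          ring
        rw [hZmv, smul_dotProduct, hA]
        have hε0 : ε' ≠ 0 := ne_of_gt hε
        simp only [smul_eq_mul]
        field_simp
        norm_num
      rw [hsub, hvA, if_pos hcase]
      rw [hvA] at hvv
      rw [hYneg, hZA, hvv, mul_one] at h
      linarith
    · rw [if_neg hcase, add_zero, hsub]
      have h := hineq v v
      rw [sub_self, Matrix.mulVec_zero, zero_dotProduct, zero_add, hvv, mul_one] at h
      linarith
  calc (X - Y).trace = ∑ i, ((X - Y).mulVec (WithLp.equiv 2 _ (b i))) ⬝ᵥ (WithLp.equiv 2 _ (b i)) :=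
        trace_eq_sum_onb N _ b
    _ ≤ ∑ i : Fin N, (2 * L₂ + (if i = i₀ then -8 * ϖ / ε' else 0)) :=
        Finset.sum_le_sum (fun i _ => key i)
    _ = -8 * ϖ / ε' + 2 * N * L₂ := by
        rw [Finset.sum_add_distrib, Finset.sum_const, Finset.sum_ite_eq' Finset.univ i₀,
          if_pos (Finset.mem_univ _)]
        simp [Finset.card_univ]
        ring
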